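/- Let θ₀ = 1 and θ_{k+1} ∈ (0,1] be defined by θ_{k+1}² = θ_k²(1 − θ_{k+1}) for k ≥ 0, and let t_k = 1/L for a constant L > 0. Then for all k ≥ 1, ∑_{i=0}^{k−1} t_i/θ_i = (1 − θ_k) ∑_{i=0}^{k} t_i/θ_i = 1/(L θ_{k−1}²) ≥ (k+1)²/(4L). -/

import Mathlib

/-- The FISTA parameter sequence with constant step `1/L` satisfies
`∑_{i<k} t_i/θ_i = (1-θ_k) ∑_{i<k+1} t_i/θ_i = 1/(L θ_{k-1}²) ≥ (k+1)²/(4L)`. -/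
theorem fista_theta_sums (θ : ℕ → ℝ) (L : ℝ) (hL : 0 < L)
    (hθ0 : θ 0 = 1) (hθmem : ∀ k, θ (k+1) ∈ Set.Ioc (0:ℝ) 1)
    (hθrec : ∀ k, (θ (k+1))^2 = (θ k)^2 * (1 - θ (k+1))) :
    ∀ k : ℕ, 1 ≤ k →
      (∑ i ∈ Finset.range k, (1/L) / θ i) =
          (1 - θ k) * ∑ i ∈ Finset.range (k+1), (1/L) / θ i ∧
      (∑ i ∈ Finset.range k, (1/L) / θ i) = 1 / (L * (θ (k-1))^2) ∧
      ((k:ℝ) + 1)^2 / (4*L) ≤ 1 / (L * (θ (k-1))^2) := by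
  have θpos : ∀ k, 0 < θ k := by
    intro k
    cases k with
    | zero => simp [hθ0]
    | succ n => exact (hθmem n).1
  -- reciprocal growth bound
  have hbound : ∀ k : ℕ, ((k : ℝ) + 2) / 2 ≤ 1 / θ k := by
    intro k
    induction k with
    | zero => simp [hθ0]
    | succ n ih =>
      have hpn := θpos n
      have hpn1 := θpos (n + 1)
      have hle : θ (n + 1) ≤ θ n := by
        nlinarith [hθrec n, sq_nonneg (θ n - θ (n+1)), sq_nonneg (θ n + θ (n+1))]
      have key : θ n * θ (n + 1) ≤ 2 * (θ n - θ (n + 1)) := by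
        nlinarith [hθrec n, mul_pos hpn hpn1]
      have hab : 1 / θ n + 1 / 2 ≤ 1 / θ (n + 1) := by
        rw [div_add_div _ _ hpn.ne' two_ne_zero, div_le_div_iff₀ (by positivity) hpn1]
        nlinarith [key]
      push_cast
      linarith
  -- closed form for the sums
  have hsum : ∀ k : ℕ, (∑ i ∈ Finset.range (k + 1), (1 / L) / θ i) = 1 / (L * (θ k) ^ 2) := by
    intro k
    induction k with
    | zero => simp [hθ0]
    | succ n ih =>
      rw [Finset.sum_range_succ, ih]
      have hpn := θpos n
      have hpn1 := θpos (n + 1)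
      have h2 : (1:ℝ) / (L * θ n ^ 2) = (1 - θ (n+1)) / (L * θ (n+1) ^ 2) := by
        rw [div_eq_div_iff (by positivity) (by positivity)]
        linear_combination L * hθrec n
      rw [h2]
      field_simp
      ring
  intro k hk
  obtain ⟨m, rfl⟩ : ∃ m, k = m + 1 := ⟨k - 1, (Nat.succ_pred_eq_of_pos hk).symm⟩
  have hpm := θpos m
  have hpm1 := θpos (m + 1)
  simp only [Nat.add_sub_cancel]
  refine ⟨?_, ?_, ?_⟩
  · rw [hsum (m + 1), hsum m, mul_one_div, div_eq_div_iff (by positivity) (by positivity)]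
    linear_combination L * hθrec m
  · exact hsum m
  · have hb := hbound m
    have hθ2 : ((m : ℝ) + 2) * θ m ≤ 2 := by
      rw [div_le_div_iff₀ (by norm_num) hpm] at hb
      linarith
    rw [div_le_div_iff₀ (by positivity) (by positivity)]
    have h1 : (((m : ℝ) + 2) * θ m) ^ 2 ≤ 4 := by
      nlinarith [mul_nonneg (by positivity : (0:ℝ) ≤ (m:ℝ) + 2) hpm.le]
    push_cast
    nlinarith [h1, hL.le, sq_nonneg (θ m)]
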